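/- Let K' be obtained from the simplicial complex K by an admissible contraction of v0 onto v1. Define φ_* on basis faces of C_•(K'_*; Z/2) by φ_*(S¹ ⊎ T²) = Σ_{A ∈ supp φ(S), B ∈ supp φ(T)} A¹ ⊎ B². Then every set A¹ ⊎ B² occurring in this sum is a face of K_* (i.e., A ∩ B = ∅), and the linear extension φ_* : C_•(K'_*; Z/2) → C_•(K_*; Z/2) is an injective chain map that commutes with the linear maps induced by the involutions τ of K'_* and of K_*. -/
import Mathlib


open Finset

variable {V : Type*} [DecidableEq V]

/-- A (finite) simplicial complex, given by its finite family of faces: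
closed under subsets and containing the empty set.  The vertices of `K` are
exactly the elements `v` with `{v} ∈ K`. -/
def IsComplex (K : Finset (Finset V)) : Prop :=
  ∅ ∈ K ∧ ∀ S ∈ K, ∀ T ⊆ S, T ∈ K

/-- The dimension of `K` : the maximum of `|F| - 1` over the faces `F` of `K`. -/
def dimC (K : Finset (Finset V)) : ℤ :=
  ((K.sup Finset.card : ℕ) : ℤ) - 1

/-- `T` is a missing face of `K` : a set of vertices of `K` which is not a face of `K`
while all its proper subsets are faces of `K`. -/
def IsMissingFace (K : Finset (Finset V)) (T : Finset V) : Prop :=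
  (∀ x ∈ T, ({x} : Finset V) ∈ K) ∧ T ∉ K ∧ ∀ S ⊂ T, S ∈ K

/-- The contraction of `u` onto `v` is admissible if no missing face of `K` of
dimension `≤ dim K` contains both `u` and `v`. -/
def Admissible (K : Finset (Finset V)) (u v : V) : Prop :=
  ∀ T : Finset V, IsMissingFace K T → (T.card : ℤ) - 1 ≤ dimC K → ¬(u ∈ T ∧ v ∈ T)

/-- The contraction of `u` onto `v`:
`K' = {T ∈ K : u ∉ T} ∪ {(T \ {u}) ∪ {v} : u ∈ T ∈ K}`. -/
def contractC (K : Finset (Finset V)) (u v : V) : Finset (Finset V) :=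
  K.filter (fun T => u ∉ T) ∪ (K.filter (fun T => u ∈ T)).image (fun T => insert v (T.erase u))

/-- The link of a face: `lk(S,K) = {T ∈ K : T ∩ S = ∅ ∧ T ∪ S ∈ K}`. -/
def linkC (K : Finset (Finset V)) (S : Finset V) : Finset (Finset V) :=
  K.filter (fun T => T ∩ S = ∅ ∧ T ∪ S ∈ K)

/-- The `m`-skeleton: all faces of dimension at most `m`. -/
def skelC (K : Finset (Finset V)) (m : ℤ) : Finset (Finset V) :=
  K.filter (fun F => (F.card : ℤ) - 1 ≤ m)

/-- The faces of `K` of dimension `n`, i.e. of cardinality `n + 1`. -/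
def facesOfDim (K : Finset (Finset V)) (n : ℕ) : Finset (Finset V) :=
  K.filter (fun F => F.card = n + 1)

/-- `C_n(K; ℤ/2)`: the `ℤ/2`-vector space with basis the `n`-dimensional faces of `K`,
realized as the space of `ℤ/2`-valued functions on the `n`-dimensional faces. -/
abbrev Chains (K : Finset (Finset V)) (n : ℕ) : Type _ :=
  {F : Finset V // F ∈ facesOfDim K n} → ZMod 2

/-- The boundary map `∂ : C_{n+1}(K;ℤ/2) → C_n(K;ℤ/2)`, determined on a basis face `F`
by `∂F = Σ_{x ∈ F} (F \ {x})`.  (The coefficient of `G` in `∂F` is `1` iff `G ⊆ F`,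
as `G` and `F` are faces with `|F| = |G| + 1`.) -/
def bdry (K : Finset (Finset V)) (n : ℕ) (c : Chains K (n + 1)) : Chains K n :=
  fun G => ∑ F ∈ (facesOfDim K (n + 1)).attach, if G.1 ⊆ F.1 then c F else 0

/-- `supp φ(F)` for the contraction of `v0` onto `v1` turning `K` into `K'`:
`{F}` if `F ∈ K`, and `{(F \ {x}) ∪ {v0} : x ∈ F, (F \ {x}) ∪ {v0} ∈ K}` otherwise. -/
def suppPhi (K : Finset (Finset V)) (v0 : V) (F : Finset V) : Finset (Finset V) :=
  if F ∈ K then {F}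
  else (F.image fun x => insert v0 (F.erase x)).filter (fun A => A ∈ K)

/-- The face `S¹ ⊎ T²` of the join of two disjoint copies of the vertex set. -/
def joinFace (S T : Finset V) : Finset (V ⊕ V) :=
  S.map ⟨Sum.inl, Sum.inl_injective⟩ ∪ T.map ⟨Sum.inr, Sum.inr_injective⟩

/-- The deleted join `K_*`: its faces are the sets `S¹ ⊎ T²` with `S, T ∈ K` and
`S ∩ T = ∅`. -/
def deletedJoin (K : Finset (Finset V)) : Finset (Finset (V ⊕ V)) :=
  ((K ×ˢ K).filter fun p => p.1 ∩ p.2 = ∅).image fun p => joinFace p.1 p.2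

/-- The involution `τ` of the deleted join on faces, sending `S¹ ⊎ T²` to `T¹ ⊎ S²`. -/
def tauFace (F : Finset (V ⊕ V)) : Finset (V ⊕ V) :=
  F.map ⟨Sum.swap, Sum.swap_leftInverse.injective⟩

/-- The linear map induced by the involution `τ` on `ℤ/2`-(co)chains of a complex `L`
on the doubled vertex set: `(τ c)(F) = c(τ F)`. -/
def tauChain (L : Finset (Finset (V ⊕ V))) (n : ℕ) (c : Chains L n) : Chains L n :=
  fun F => if h : tauFace F.1 ∈ facesOfDim L n then c ⟨tauFace F.1, h⟩ else 0

/-- The first-copy part `S` of a face `F = S¹ ⊎ T²` of the (deleted) join. -/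
def leftPart (F : Finset (V ⊕ V)) : Finset V :=
  F.biUnion fun x => match x with | Sum.inl a => {a} | Sum.inr _ => ∅

/-- The second-copy part `T` of a face `F = S¹ ⊎ T²` of the (deleted) join. -/
def rightPart (F : Finset (V ⊕ V)) : Finset V :=
  F.biUnion fun x => match x with | Sum.inl _ => ∅ | Sum.inr a => {a}

/-- The support of `φ_*` on a basis face `G = S¹ ⊎ T²` of `K'_*`:
all the sets `A¹ ⊎ B²` with `A ∈ supp φ(S)` and `B ∈ supp φ(T)`. -/
def suppPhiStar (K : Finset (Finset V)) (v0 : V) (G : Finset (V ⊕ V)) :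
    Finset (Finset (V ⊕ V)) :=
  ((suppPhi K v0 (leftPart G)) ×ˢ (suppPhi K v0 (rightPart G))).image
    fun p => joinFace p.1 p.2

/-- The map `φ_* : C_•(K'_*;ℤ/2) → C_•(K_*;ℤ/2)` determined on a basis face
`G = S¹ ⊎ T²` of `K'_*` by `φ_*(S¹ ⊎ T²) = Σ_{A ∈ supp φ(S), B ∈ supp φ(T)} A¹ ⊎ B²`. -/
def phiStar (K K' : Finset (Finset V)) (v0 : V) (n : ℕ)
    (c : Chains (deletedJoin K') n) : Chains (deletedJoin K) n :=
  fun A => ∑ G ∈ (facesOfDim (deletedJoin K') n).attach,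
    if A.1 ∈ suppPhiStar K v0 G.1 then c G else 0


section AuxLemmas

variable {K : Finset (Finset V)} {v0 v1 : V}

lemma mem_contract_iff {S : Finset V} :
    S ∈ contractC K v0 v1 ↔
      (S ∈ K ∧ v0 ∉ S) ∨ ∃ U ∈ K, v0 ∈ U ∧ S = insert v1 (U.erase v0) := by
  constructor
  · intro h
    rcases Finset.mem_union.mp h with h | h
    · exact Or.inl (by simpa using Finset.mem_filter.mp h)
    · obtain ⟨U, hU, rfl⟩ := Finset.mem_image.mp h
      rcases Finset.mem_filter.mp hU with ⟨hU1, hU2⟩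
      exact Or.inr ⟨U, hU1, hU2, rfl⟩
  · rintro (⟨h1, h2⟩ | ⟨U, hU, hv, rfl⟩)
    · exact Finset.mem_union_left _ (Finset.mem_filter.mpr ⟨h1, h2⟩)
    · exact Finset.mem_union_right _
        (Finset.mem_image.mpr ⟨U, Finset.mem_filter.mpr ⟨hU, hv⟩, rfl⟩)

lemma v0_notMem_contract (hne : v0 ≠ v1) {S : Finset V}
    (hS : S ∈ contractC K v0 v1) : v0 ∉ S := by
  rcases mem_contract_iff.mp hS with ⟨_, h⟩ | ⟨U, _, _, rfl⟩
  · exact h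
  · intro h
    rcases Finset.mem_insert.mp h with h | h
    · exact hne h
    · exact (Finset.mem_erase.mp h).1 rfl

lemma contract_spec (hK : IsComplex K) (hne : v0 ≠ v1) {T : Finset V}
    (hT : T ∈ contractC K v0 v1) (hTK : T ∉ K) :
    v1 ∈ T ∧ v0 ∉ T ∧ insert v0 (T.erase v1) ∈ K ∧ T.card ≤ K.sup Finset.card := by
  have hv0 : v0 ∉ T := v0_notMem_contract hne hT
  rcases mem_contract_iff.mp hT with ⟨h, _⟩ | ⟨U, hU, hvU, rfl⟩
  · exact absurd h hTK
  refine ⟨Finset.mem_insert_self _ _, hv0, ?_, ?_⟩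
  · apply hK.2 U hU
    intro x hx
    rcases Finset.mem_insert.mp hx with rfl | hx
    · exact hvU
    · have hx' := Finset.mem_erase.mp hx
      have : x ∈ insert v1 (U.erase v0) := hx'.2
      rcases Finset.mem_insert.mp this with rfl | h
      · exact absurd rfl hx'.1
      · exact (Finset.mem_erase.mp h).2
  · calc (insert v1 (U.erase v0)).card ≤ (U.erase v0).card + 1 := Finset.card_insert_le _ _
      _ = U.card := by
          rw [Finset.card_erase_of_mem hvU]
          have : 1 ≤ U.card := Finset.card_pos.mpr ⟨v0, hvU⟩
          omega
      _ ≤ K.sup Finset.card := Finset.le_sup hU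

lemma singleton_mem_of_mem_contract (hK : IsComplex K) (h1 : ({v1} : Finset V) ∈ K)
    {T : Finset V} (hT : T ∈ contractC K v0 v1) {x : V} (hx : x ∈ T) :
    ({x} : Finset V) ∈ K := by
  rcases mem_contract_iff.mp hT with ⟨h, _⟩ | ⟨U, hU, hvU, rfl⟩
  · exact hK.2 T h {x} (Finset.singleton_subset_iff.mpr hx)
  · rcases Finset.mem_insert.mp hx with rfl | hx
    · exact h1
    · exact hK.2 U hU {x}
        (Finset.singleton_subset_iff.mpr (Finset.mem_erase.mp hx).2)

lemma contract_isComplex (hK : IsComplex K) (hne : v0 ≠ v1) :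
    IsComplex (contractC K v0 v1) := by
  constructor
  · exact mem_contract_iff.mpr (Or.inl ⟨hK.1, Finset.notMem_empty _⟩)
  · intro S hS T hTS
    have hv0S : v0 ∉ S := v0_notMem_contract hne hS
    have hv0T : v0 ∉ T := fun h => hv0S (hTS h)
    rcases mem_contract_iff.mp hS with ⟨h, _⟩ | ⟨U, hU, hvU, rfl⟩
    · exact mem_contract_iff.mpr (Or.inl ⟨hK.2 S h T hTS, hv0T⟩)
    by_cases hv1T : v1 ∈ T
    · refine mem_contract_iff.mpr (Or.inr ⟨insert v0 (T.erase v1), ?_, Finset.mem_insert_self _ _, ?_⟩)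
      · apply hK.2 U hU
        intro x hx
        rcases Finset.mem_insert.mp hx with rfl | hx
        · exact hvU
        · have hx' := Finset.mem_erase.mp hx
          have : x ∈ insert v1 (U.erase v0) := hTS hx'.2
          rcases Finset.mem_insert.mp this with rfl | h
          · exact absurd rfl hx'.1
          · exact (Finset.mem_erase.mp h).2
      · rw [Finset.erase_insert (fun h => hv0T (Finset.mem_erase.mp h).2),
          Finset.insert_erase hv1T]
    · refine mem_contract_iff.mpr (Or.inl ⟨hK.2 U hU T ?_, hv0T⟩)
      intro x hx
      have : x ∈ insert v1 (U.erase v0) := hTS hx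
      rcases Finset.mem_insert.mp this with rfl | h
      · exact absurd hx hv1T
      · exact (Finset.mem_erase.mp h).2

lemma exists_missingFace (hK : IsComplex K) {C : Finset V} (hC : C ∉ K)
    (hv : ∀ x ∈ C, ({x} : Finset V) ∈ K) :
    ∃ M ⊆ C, IsMissingFace K M := by
  classical
  set D := C.powerset.filter (fun S => S ∉ K) with hD
  have hDne : D.Nonempty := ⟨C, Finset.mem_filter.mpr ⟨Finset.mem_powerset.mpr (subset_refl C), hC⟩⟩
  obtain ⟨M, hMD, hMmin⟩ := D.exists_min_image Finset.card hDne
  have hMC : M ⊆ C := Finset.mem_powerset.mp (Finset.mem_filter.mp hMD).1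
  have hMK : M ∉ K := (Finset.mem_filter.mp hMD).2
  refine ⟨M, hMC, fun x hx => hv x (hMC hx), hMK, ?_⟩
  intro S hS
  by_contra hSK
  have hSD : S ∈ D := Finset.mem_filter.mpr
    ⟨Finset.mem_powerset.mpr (hS.1.trans hMC), hSK⟩
  have := hMmin S hSD
  have := Finset.card_lt_card hS
  omega

lemma insert_v0_mem (hK : IsComplex K) (hne : v0 ≠ v1) (h0 : ({v0} : Finset V) ∈ K)
    (hadm : Admissible K v0 v1) {T Q : Finset V}
    (hT : T ∈ contractC K v0 v1) (hTK : T ∉ K) (hQT : Q ⊆ T) (hQ : Q ∈ K) :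
    insert v0 Q ∈ K := by
  obtain ⟨hv1T, hv0T, hB0, hcard⟩ := contract_spec hK hne hT hTK
  by_contra hC
  have hQne : Q ≠ T := fun h => hTK (h ▸ hQ)
  have hQlt : Q.card < T.card := Finset.card_lt_card (Finset.ssubset_iff_subset_ne.mpr ⟨hQT, hQne⟩)
  have hsing : ∀ x ∈ insert v0 Q, ({x} : Finset V) ∈ K := by
    intro x hx
    rcases Finset.mem_insert.mp hx with rfl | hx
    · exact h0
    · exact hK.2 Q hQ {x} (Finset.singleton_subset_iff.mpr hx)
  obtain ⟨M, hMC, hM⟩ := exists_missingFace hK hC hsing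
  have hv0M : v0 ∈ M := by
    by_contra h
    refine hM.2.1 (hK.2 Q hQ M ?_)
    intro x hx
    rcases Finset.mem_insert.mp (hMC hx) with rfl | hx'
    · exact absurd hx h
    · exact hx'
  have hMcard : (M.card : ℤ) - 1 ≤ dimC K := by
    have h2 : M.card ≤ (insert v0 Q).card := Finset.card_le_card hMC
    have h3 : (insert v0 Q).card ≤ Q.card + 1 := Finset.card_insert_le _ _
    have h4 : M.card ≤ K.sup Finset.card := by omega
    unfold dimC
    have := (Nat.cast_le (α := ℤ)).mpr h4
    omega
  have hv1M : v1 ∉ M := fun h => hadm M hM hMcard ⟨hv0M, h⟩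
  apply hM.2.1
  apply hK.2 _ hB0 M
  intro x hx
  rcases Finset.mem_insert.mp (hMC hx) with rfl | hxQ
  · exact Finset.mem_insert_self _ _
  · refine Finset.mem_insert_of_mem (Finset.mem_erase.mpr ⟨fun he => hv1M (he ▸ hx), hQT hxQ⟩)

lemma insert_v0_erase_iff (hK : IsComplex K) (hne : v0 ≠ v1) (h0 : ({v0} : Finset V) ∈ K)
    (hadm : Admissible K v0 v1) {T : Finset V}
    (hT : T ∈ contractC K v0 v1) (hTK : T ∉ K) (x : V) :
    insert v0 (T.erase x) ∈ K ↔ T.erase x ∈ K := by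
  constructor
  · intro h
    exact hK.2 _ h _ (Finset.subset_insert _ _)
  · intro h
    exact insert_v0_mem hK hne h0 hadm hT hTK (Finset.erase_subset _ _) h

lemma suppPhi_cases {F A : Finset V} (hA : A ∈ suppPhi K v0 F) :
    (F ∈ K ∧ A = F) ∨ (F ∉ K ∧ A ∈ K ∧ ∃ x ∈ F, A = insert v0 (F.erase x)) := by
  by_cases h : F ∈ K
  · rw [suppPhi, if_pos h] at hA
    exact Or.inl ⟨h, Finset.mem_singleton.mp hA⟩
  · rw [suppPhi, if_neg h] at hA
    rcases Finset.mem_filter.mp hA with ⟨hA1, hA2⟩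
    obtain ⟨x, hx, rfl⟩ := Finset.mem_image.mp hA1
    exact Or.inr ⟨h, hA2, x, hx, rfl⟩

lemma memK_of_mem_suppPhi {F A : Finset V} (hA : A ∈ suppPhi K v0 F) : A ∈ K := by
  rcases suppPhi_cases hA with ⟨h, rfl⟩ | ⟨_, h, _⟩ <;> exact h

lemma card_of_mem_suppPhi {F A : Finset V} (hv0F : v0 ∉ F)
    (hA : A ∈ suppPhi K v0 F) : A.card = F.card := by
  rcases suppPhi_cases hA with ⟨h, rfl⟩ | ⟨_, _, x, hx, rfl⟩
  · rfl
  · rw [Finset.card_insert_of_notMem (fun h => hv0F (Finset.mem_erase.mp h).2),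
      Finset.card_erase_of_mem hx]
    have : 1 ≤ F.card := Finset.card_pos.mpr ⟨x, hx⟩
    omega

/-- The canonical element of `supp φ(S)`. -/
def canonF (K : Finset (Finset V)) (v0 v1 : V) (S : Finset V) : Finset V :=
  if S ∈ K then S else insert v0 (S.erase v1)

lemma canonF_mem_suppPhi (hK : IsComplex K) (hne : v0 ≠ v1)
    {S : Finset V} (hS : S ∈ contractC K v0 v1) :
    canonF K v0 v1 S ∈ suppPhi K v0 S := by
  by_cases h : S ∈ K
  · rw [canonF, if_pos h, suppPhi, if_pos h]
    exact Finset.mem_singleton_self _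
  · obtain ⟨hv1S, hv0S, hB0, _⟩ := contract_spec hK hne hS h
    rw [canonF, if_neg h, suppPhi, if_neg h]
    exact Finset.mem_filter.mpr ⟨Finset.mem_image.mpr ⟨v1, hv1S, rfl⟩, hB0⟩

lemma canonF_unique (hK : IsComplex K) (hne : v0 ≠ v1)
    {S S' : Finset V} (hS : S ∈ contractC K v0 v1) (hS' : S' ∈ contractC K v0 v1)
    (h : canonF K v0 v1 S ∈ suppPhi K v0 S') : S' = S := by
  have hv0S : v0 ∉ S := v0_notMem_contract hne hS
  have hv0S' : v0 ∉ S' := v0_notMem_contract hne hS'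
  by_cases hSK : S ∈ K
  · rw [canonF, if_pos hSK] at h
    rcases suppPhi_cases h with ⟨_, hout⟩ | ⟨_, _, x, hx, hout⟩
    · exact hout.symm
    · exact absurd (hout ▸ Finset.mem_insert_self v0 _) hv0S
  · obtain ⟨hv1S, _, hB0, _⟩ := contract_spec hK hne hS hSK
    rw [canonF, if_neg hSK] at h
    rcases suppPhi_cases h with ⟨hS'K, hout⟩ | ⟨hS'K, _, x, hx, hout⟩
    · exact absurd (hout ▸ Finset.mem_insert_self v0 _) hv0S'
    · obtain ⟨hv1S', _, _, _⟩ := contract_spec hK hne hS' hS'K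
      have hv0e : v0 ∉ S.erase v1 := fun hh => hv0S (Finset.mem_erase.mp hh).2
      have hv0e' : v0 ∉ S'.erase x := fun hh => hv0S' (Finset.mem_erase.mp hh).2
      have herase : S'.erase x = S.erase v1 := by
        have := congrArg (fun (B : Finset V) => B.erase v0) hout
        simpa [Finset.erase_insert hv0e', Finset.erase_insert hv0e] using this.symm
      have hxv1 : x = v1 := by
        by_contra hxx
        have : v1 ∈ S'.erase x := Finset.mem_erase.mpr ⟨fun hh => hxx hh.symm, hv1S'⟩
        rw [herase] at this
        exact (Finset.mem_erase.mp this).1 rfl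
      subst hxv1
      rw [← Finset.insert_erase hv1S', herase, Finset.insert_erase hv1S]

section JoinLemmas

lemma inl_mem_joinFace {a : V} {S T : Finset V} :
    Sum.inl a ∈ joinFace S T ↔ a ∈ S := by
  simp [joinFace]

lemma inr_mem_joinFace {b : V} {S T : Finset V} :
    Sum.inr b ∈ joinFace S T ↔ b ∈ T := by
  simp [joinFace]

lemma mem_leftPart {a : V} {F : Finset (V ⊕ V)} :
    a ∈ leftPart F ↔ Sum.inl a ∈ F := by
  simp only [leftPart, Finset.mem_biUnion]
  constructor
  · rintro ⟨x, hx, hax⟩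
    cases x with
    | inl c =>
      simp only [Finset.mem_singleton] at hax
      exact hax ▸ hx
    | inr c => simp at hax
  · intro h
    exact ⟨Sum.inl a, h, Finset.mem_singleton_self _⟩

lemma mem_rightPart {b : V} {F : Finset (V ⊕ V)} :
    b ∈ rightPart F ↔ Sum.inr b ∈ F := by
  simp only [rightPart, Finset.mem_biUnion]
  constructor
  · rintro ⟨x, hx, hax⟩
    cases x with
    | inl c => simp at hax
    | inr c =>
      simp only [Finset.mem_singleton] at hax
      exact hax ▸ hx
  · intro h
    exact ⟨Sum.inr b, h, Finset.mem_singleton_self _⟩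

lemma leftPart_joinFace {S T : Finset V} : leftPart (joinFace S T) = S := by
  ext a; rw [mem_leftPart, inl_mem_joinFace]

lemma rightPart_joinFace {S T : Finset V} : rightPart (joinFace S T) = T := by
  ext b; rw [mem_rightPart, inr_mem_joinFace]

lemma joinFace_parts (F : Finset (V ⊕ V)) : joinFace (leftPart F) (rightPart F) = F := by
  ext x
  cases x with
  | inl a => rw [inl_mem_joinFace, mem_leftPart]
  | inr b => rw [inr_mem_joinFace, mem_rightPart]

lemma joinFace_subset_joinFace {S T S' T' : Finset V} :
    joinFace S T ⊆ joinFace S' T' ↔ S ⊆ S' ∧ T ⊆ T' := by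
  constructor
  · intro h
    constructor
    · intro a ha; exact inl_mem_joinFace.mp (h (inl_mem_joinFace.mpr ha))
    · intro b hb; exact inr_mem_joinFace.mp (h (inr_mem_joinFace.mpr hb))
  · rintro ⟨h1, h2⟩ x hx
    cases x with
    | inl a => exact inl_mem_joinFace.mpr (h1 (inl_mem_joinFace.mp hx))
    | inr b => exact inr_mem_joinFace.mpr (h2 (inr_mem_joinFace.mp hx))

lemma joinFace_inj {S T S' T' : Finset V} (h : joinFace S T = joinFace S' T') :
    S = S' ∧ T = T' := by
  constructor
  · have := congrArg leftPart h
    rwa [leftPart_joinFace, leftPart_joinFace] at this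
  · have := congrArg rightPart h
    rwa [rightPart_joinFace, rightPart_joinFace] at this

lemma card_joinFace {S T : Finset V} : (joinFace S T).card = S.card + T.card := by
  rw [joinFace, Finset.card_union_of_disjoint, Finset.card_map, Finset.card_map]
  simp only [Finset.disjoint_left, Finset.mem_map]
  rintro x ⟨a, _, rfl⟩ ⟨b, _, h⟩
  exact Sum.inl_ne_inr h.symm

lemma mem_deletedJoin {F : Finset (V ⊕ V)} :
    F ∈ deletedJoin K ↔ leftPart F ∈ K ∧ rightPart F ∈ K ∧ leftPart F ∩ rightPart F = ∅ := by
  rw [deletedJoin, Finset.mem_image]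
  constructor
  · rintro ⟨p, hp, rfl⟩
    rcases Finset.mem_filter.mp hp with ⟨hp1, hp2⟩
    rcases Finset.mem_product.mp hp1 with ⟨h1, h2⟩
    rw [leftPart_joinFace, rightPart_joinFace]
    exact ⟨h1, h2, hp2⟩
  · rintro ⟨h1, h2, h3⟩
    exact ⟨(leftPart F, rightPart F),
      Finset.mem_filter.mpr ⟨Finset.mem_product.mpr ⟨h1, h2⟩, h3⟩, joinFace_parts F⟩

lemma mem_suppPhiStar {A G : Finset (V ⊕ V)} :
    A ∈ suppPhiStar K v0 G ↔
      leftPart A ∈ suppPhi K v0 (leftPart G) ∧ rightPart A ∈ suppPhi K v0 (rightPart G) := by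
  rw [suppPhiStar, Finset.mem_image]
  constructor
  · rintro ⟨p, hp, rfl⟩
    rcases Finset.mem_product.mp hp with ⟨h1, h2⟩
    rw [leftPart_joinFace, rightPart_joinFace]
    exact ⟨h1, h2⟩
  · rintro ⟨h1, h2⟩
    exact ⟨(leftPart A, rightPart A),
      Finset.mem_product.mpr ⟨h1, h2⟩, joinFace_parts A⟩

lemma mem_tauFace {x : V ⊕ V} {F : Finset (V ⊕ V)} :
    x ∈ tauFace F ↔ Sum.swap x ∈ F := by
  rw [tauFace, Finset.mem_map]
  constructor
  · rintro ⟨y, hy, rfl⟩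
    simpa [Sum.swap_swap] using hy
  · intro h
    exact ⟨Sum.swap x, h, Sum.swap_swap x⟩

lemma tauFace_tauFace (F : Finset (V ⊕ V)) : tauFace (tauFace F) = F := by
  ext x; rw [mem_tauFace, mem_tauFace, Sum.swap_swap]

lemma leftPart_tauFace {F : Finset (V ⊕ V)} : leftPart (tauFace F) = rightPart F := by
  ext a; rw [mem_leftPart, mem_tauFace, mem_rightPart]; rfl

lemma rightPart_tauFace {F : Finset (V ⊕ V)} : rightPart (tauFace F) = leftPart F := by
  ext a; rw [mem_rightPart, mem_tauFace, mem_leftPart]; rfl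

lemma card_tauFace {F : Finset (V ⊕ V)} : (tauFace F).card = F.card :=
  Finset.card_map _

lemma tauFace_mem_facesOfDim {L : Finset (Finset V)} {F : Finset (V ⊕ V)} {n : ℕ}
    (h : F ∈ facesOfDim (deletedJoin L) n) :
    tauFace F ∈ facesOfDim (deletedJoin L) n := by
  rcases Finset.mem_filter.mp h with ⟨h1, h2⟩
  rcases mem_deletedJoin.mp h1 with ⟨ha, hb, hc⟩
  refine Finset.mem_filter.mpr ⟨mem_deletedJoin.mpr ?_, by rw [card_tauFace]; exact h2⟩
  rw [leftPart_tauFace, rightPart_tauFace]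
  exact ⟨hb, ha, by rw [Finset.inter_comm]; exact hc⟩

end JoinLemmas

end AuxLemmas


section MainLemmas

variable {K : Finset (Finset V)} {v0 v1 : V}

lemma part1_lemma (hK : IsComplex K) (hne : v0 ≠ v1)
    {S T A B : Finset V} (hS : S ∈ contractC K v0 v1) (hT : T ∈ contractC K v0 v1)
    (hST : S ∩ T = ∅) (hA : A ∈ suppPhi K v0 S) (hB : B ∈ suppPhi K v0 T) :
    A ∩ B = ∅ ∧ joinFace A B ∈ deletedJoin K := by
  have hAK : A ∈ K := memK_of_mem_suppPhi hA
  have hBK : B ∈ K := memK_of_mem_suppPhi hB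
  have hdisj : ∀ x : V, x ∈ S → x ∉ T := by
    intro x hx hx'
    have : x ∈ S ∩ T := Finset.mem_inter.mpr ⟨hx, hx'⟩
    rw [hST] at this
    exact Finset.notMem_empty x this
  have hv0S : v0 ∉ S := v0_notMem_contract hne hS
  have hv0T : v0 ∉ T := v0_notMem_contract hne hT
  have hABdisj : A ∩ B = ∅ := by
    rw [Finset.eq_empty_iff_forall_notMem]
    intro q hq
    rcases Finset.mem_inter.mp hq with ⟨hqA, hqB⟩
    rcases suppPhi_cases hA with ⟨hSK, rfl⟩ | ⟨hSK, _, x, hx, rfl⟩ <;>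
      rcases suppPhi_cases hB with ⟨hTK, rfl⟩ | ⟨hTK, _, y, hy, rfl⟩
    · exact hdisj q hqA hqB
    · rcases Finset.mem_insert.mp hqB with rfl | hq'
      · exact hv0S hqA
      · exact hdisj q hqA (Finset.mem_erase.mp hq').2
    · rcases Finset.mem_insert.mp hqA with rfl | hq'
      · exact hv0T hqB
      · exact hdisj q (Finset.mem_erase.mp hq').2 hqB
    · have h1 := (contract_spec hK hne hS hSK).1
      have h2 := (contract_spec hK hne hT hTK).1
      exact hdisj v1 h1 h2
  refine ⟨hABdisj, mem_deletedJoin.mpr ?_⟩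
  rw [leftPart_joinFace, rightPart_joinFace]
  exact ⟨hAK, hBK, hABdisj⟩

lemma mem_facesOfDim {L : Finset (Finset V)} {F : Finset V} {n : ℕ} :
    F ∈ facesOfDim L n ↔ F ∈ L ∧ F.card = n + 1 := Finset.mem_filter

lemma suppPhiStar_subset_faces (hK : IsComplex K) (hne : v0 ≠ v1)
    {n : ℕ} {G : Finset (V ⊕ V)}
    (hG : G ∈ facesOfDim (deletedJoin (contractC K v0 v1)) n) :
    suppPhiStar K v0 G ⊆ facesOfDim (deletedJoin K) n := by
  intro A hA
  rcases Finset.mem_filter.mp hG with ⟨hG1, hG2⟩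
  rcases mem_deletedJoin.mp hG1 with ⟨hGl, hGr, hGd⟩
  rcases mem_suppPhiStar.mp hA with ⟨hAl, hAr⟩
  have hpart := part1_lemma hK hne hGl hGr hGd hAl hAr
  refine Finset.mem_filter.mpr ⟨mem_deletedJoin.mpr
    ⟨memK_of_mem_suppPhi hAl, memK_of_mem_suppPhi hAr, hpart.1⟩, ?_⟩
  have e1 : A.card = (leftPart A).card + (rightPart A).card := by
    conv_lhs => rw [← joinFace_parts A]
    exact card_joinFace
  have e2 : G.card = (leftPart G).card + (rightPart G).card := by
    conv_lhs => rw [← joinFace_parts G]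
    exact card_joinFace
  rw [e1, card_of_mem_suppPhi (v0_notMem_contract hne hGl) hAl,
    card_of_mem_suppPhi (v0_notMem_contract hne hGr) hAr, ← e2, hG2]

/-- `Σ_{a ∈ supp φ(S)} [P ⊆ a]` in `ℤ/2`. -/
def fS (K : Finset (Finset V)) (v0 : V) (P S : Finset V) : ZMod 2 :=
  ∑ a ∈ suppPhi K v0 S, if P ⊆ a then 1 else 0

/-- `Σ_{S' ⊆ S} [P ∈ supp φ(S')]` in `ℤ/2`. -/
def gS (K : Finset (Finset V)) (v0 : V) (P S : Finset V) : ZMod 2 :=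
  ∑ S' ∈ S.powerset, if P ∈ suppPhi K v0 S' then 1 else 0

lemma fS_zero (hne : v0 ≠ v1) {P S : Finset V} (hS : S ∈ contractC K v0 v1)
    (h : S.card < P.card) : fS K v0 P S = 0 := by
  apply Finset.sum_eq_zero
  intro a ha
  rw [if_neg]
  intro hsub
  have h1 := card_of_mem_suppPhi (v0_notMem_contract hne hS) ha
  have h2 := Finset.card_le_card hsub
  omega

lemma gS_zero (hK : IsComplex K) (hne : v0 ≠ v1) {P S : Finset V}
    (hS : S ∈ contractC K v0 v1) (h : S.card < P.card) : gS K v0 P S = 0 := by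
  apply Finset.sum_eq_zero
  intro S' hS'
  have hS'sub : S' ⊆ S := Finset.mem_powerset.mp hS'
  have hS'mem : S' ∈ contractC K v0 v1 :=
    (contract_isComplex hK hne).2 S hS S' hS'sub
  rw [if_neg]
  intro hsup
  have h1 := card_of_mem_suppPhi (v0_notMem_contract hne hS'mem) hsup
  have h2 := Finset.card_le_card hS'sub
  omega

lemma fS_eq (hne : v0 ≠ v1) {P S : Finset V} (hS : S ∈ contractC K v0 v1)
    (h : P.card = S.card) :
    fS K v0 P S = if P ∈ suppPhi K v0 S then 1 else 0 := by
  rw [fS]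
  rw [show (∑ a ∈ suppPhi K v0 S, if P ⊆ a then (1 : ZMod 2) else 0)
      = ∑ a ∈ suppPhi K v0 S, if a = P then (1 : ZMod 2) else 0 from
    Finset.sum_congr rfl fun a ha => if_congr ⟨fun hsub => by
      have h1 := card_of_mem_suppPhi (v0_notMem_contract hne hS) ha
      exact (Finset.eq_of_subset_of_card_le hsub (by omega)).symm,
      fun he => he ▸ Finset.Subset.refl P⟩ rfl rfl]
  exact Finset.sum_ite_eq' _ _ _

lemma gS_eq (hK : IsComplex K) (hne : v0 ≠ v1) {P S : Finset V}
    (hS : S ∈ contractC K v0 v1) (h : P.card = S.card) :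
    gS K v0 P S = if P ∈ suppPhi K v0 S then 1 else 0 := by
  rw [gS]
  rw [show (∑ S' ∈ S.powerset, if P ∈ suppPhi K v0 S' then (1 : ZMod 2) else 0)
      = ∑ S' ∈ S.powerset, if S' = S then (if P ∈ suppPhi K v0 S then (1 : ZMod 2) else 0) else 0 from
    Finset.sum_congr rfl fun S' hS' => by
      have hsub : S' ⊆ S := Finset.mem_powerset.mp hS'
      by_cases he : S' = S
      · subst he; rw [if_pos rfl]
      · rw [if_neg he, if_neg]
        intro hsup
        have hS'mem : S' ∈ contractC K v0 v1 :=
          (contract_isComplex hK hne).2 S hS S' hsub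
        have h1 := card_of_mem_suppPhi (v0_notMem_contract hne hS'mem) hsup
        exact he (Finset.eq_of_subset_of_card_le hsub (by omega))]
  rw [Finset.sum_ite_eq' _ _ _, if_pos (Finset.mem_powerset.mpr (Finset.Subset.refl S))]

end MainLemmas


lemma fS_eq_gS {K : Finset (Finset V)} {v0 v1 : V}
    (hK : IsComplex K) (hne : v0 ≠ v1) (h0 : ({v0} : Finset V) ∈ K)
    (hadm : Admissible K v0 v1) {T Q : Finset V}
    (hT : T ∈ contractC K v0 v1) (hQ : Q ∈ K) (hcard : Q.card + 1 = T.card) :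
    fS K v0 Q T = gS K v0 Q T := by
  by_cases hTK : T ∈ K
  · -- easy case : `T ∈ K`, both sides are `[Q ⊆ T]`
    have hf : fS K v0 Q T = if Q ⊆ T then 1 else 0 := by
      rw [fS, suppPhi, if_pos hTK, Finset.sum_singleton]
    have hiff : ∀ S' ∈ T.powerset, (Q ∈ suppPhi K v0 S') ↔ S' = Q := by
      intro S' hS'
      constructor
      · intro h
        rcases suppPhi_cases h with ⟨_, rfl⟩ | ⟨hS'K, _, x, hx, _⟩
        · rfl
        · exact absurd (hK.2 T hTK S' (Finset.mem_powerset.mp hS')) hS'K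
      · rintro rfl
        rw [suppPhi, if_pos hQ]
        exact Finset.mem_singleton_self _
    have hg : gS K v0 Q T = if Q ⊆ T then 1 else 0 := by
      rw [gS, Finset.sum_congr rfl (fun S' hS' => if_congr (hiff S' hS') rfl rfl),
        Finset.sum_ite_eq' _ _ _]
      simp [Finset.mem_powerset]
    rw [hf, hg]
  · obtain ⟨hv1T, hv0T, hB0, _⟩ := contract_spec hK hne hT hTK
    set B : V → Finset V := fun x => insert v0 (T.erase x) with hB
    have hvx : ∀ x : V, v0 ∉ T.erase x := fun x h => hv0T (Finset.mem_erase.mp h).2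
    have hBinj : ∀ x ∈ T, ∀ y ∈ T, B x = B y → x = y := by
      intro x hx y hy hxy
      have hexy : T.erase x = T.erase y := by
        have := congrArg (fun s : Finset V => s.erase v0) hxy
        simpa [hB, Finset.erase_insert (hvx x), Finset.erase_insert (hvx y)] using this
      by_contra hne'
      have hx' : x ∈ T.erase y := Finset.mem_erase.mpr ⟨hne', hx⟩
      rw [← hexy] at hx'
      exact (Finset.mem_erase.mp hx').1 rfl
    have hfS1 : fS K v0 Q T
        = ∑ x ∈ T, (if B x ∈ K then (if Q ⊆ B x then (1 : ZMod 2) else 0) else 0) := by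
      rw [fS, suppPhi, if_neg hTK, Finset.sum_filter, Finset.sum_image hBinj]
    by_cases hv0Q : v0 ∈ Q
    · -- hard case : `v0 ∈ Q`
      set R := Q.erase v0 with hR
      have hQcard : 1 ≤ Q.card := Finset.card_pos.mpr ⟨v0, hv0Q⟩
      have hRcard : R.card + 1 = Q.card := by
        rw [hR, Finset.card_erase_of_mem hv0Q]; omega
      have hQR : Q = insert v0 R := (Finset.insert_erase hv0Q).symm
      have hv0R : v0 ∉ R := fun h => (Finset.mem_erase.mp h).1 rfl
      have hRQ : R ⊆ Q := Finset.erase_subset _ _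
      have hQBx : ∀ x, Q ⊆ B x ↔ R ⊆ T.erase x := by
        intro x
        constructor
        · intro h q hq
          rcases Finset.mem_insert.mp (h (hRQ hq)) with rfl | h'
          · exact absurd hq hv0R
          · exact h'
        · intro h q hq
          rw [hQR] at hq
          rcases Finset.mem_insert.mp hq with rfl | h'
          · exact Finset.mem_insert_self _ _
          · exact Finset.mem_insert_of_mem (h h')
      have hterm : ∀ x ∈ T, (if B x ∈ K then (if Q ⊆ B x then (1 : ZMod 2) else 0) else 0)
          = if R ⊆ T.erase x then (if T.erase x ∈ K then (1 : ZMod 2) else 0) else 0 := by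
        intro x hx
        have h1 : (B x ∈ K) ↔ T.erase x ∈ K := insert_v0_erase_iff hK hne h0 hadm hT hTK x
        have h2 := hQBx x
        by_cases ha : T.erase x ∈ K <;> by_cases hb : R ⊆ T.erase x <;>
          simp [h1, h2, ha, hb]
      by_cases hRT : R ⊆ T
      · -- `R ⊆ T` : both sides are sums over the two elements of `T \ R`
        have hfS3 : fS K v0 Q T
            = ∑ x ∈ T \ R, (if T.erase x ∈ K then (1 : ZMod 2) else 0) := by
          rw [hfS1, Finset.sum_congr rfl hterm, ← Finset.sum_filter]
          congr 1
          ext y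
          simp [Finset.mem_filter, Finset.mem_sdiff, Finset.subset_erase, hRT]
        have hgterm : ∀ S' ∈ T.powerset,
            (if Q ∈ suppPhi K v0 S' then (1 : ZMod 2) else 0)
            = if (R ⊆ S' ∧ S'.card = R.card + 1) then
                (if S' ∉ K then (1 : ZMod 2) else 0) else 0 := by
          intro S' hS'
          have hsub : S' ⊆ T := Finset.mem_powerset.mp hS'
          have hv0S' : v0 ∉ S' := fun h => hv0T (hsub h)
          have hQS' : Q ∈ suppPhi K v0 S' ↔ (S' ∉ K ∧ R ⊆ S' ∧ S'.card = R.card + 1) := by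
            constructor
            · intro h
              rcases suppPhi_cases h with ⟨_, he⟩ | ⟨hS'K, _, x, hx, he⟩
              · exact absurd (he ▸ hv0Q) hv0S'
              · have hvS'x : v0 ∉ S'.erase x := fun hh => hv0S' (Finset.mem_erase.mp hh).2
                have hRe : R = S'.erase x := by
                  rw [hR, he, Finset.erase_insert hvS'x]
                refine ⟨hS'K, hRe ▸ Finset.erase_subset _ _, ?_⟩
                rw [hRe, Finset.card_erase_of_mem hx]
                have : 1 ≤ S'.card := Finset.card_pos.mpr ⟨x, hx⟩
                omega
            · rintro ⟨hS'K, hRS', hcS'⟩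
              have hz1 : (S' \ R).card = 1 := by
                rw [Finset.card_sdiff_of_subset hRS']; omega
              obtain ⟨z, hz⟩ := Finset.card_eq_one.mp hz1
              have hzS' : z ∈ S' := by
                have : z ∈ S' \ R := by rw [hz]; exact Finset.mem_singleton_self _
                exact (Finset.mem_sdiff.mp this).1
              have hez : S'.erase z = R := by
                rw [Finset.erase_eq, ← hz, Finset.sdiff_sdiff_self_left,
                  Finset.inter_eq_right.mpr hRS']
              rw [suppPhi, if_neg hS'K]
              refine Finset.mem_filter.mpr ⟨Finset.mem_image.mpr ⟨z, hzS', ?_⟩, hQ⟩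
              rw [hez, ← hQR]
            
          by_cases h1 : R ⊆ S' ∧ S'.card = R.card + 1 <;> by_cases h2 : S' ∈ K <;>
            simp [hQS', h1, h2]
        have himg : T.powerset.filter (fun S' => R ⊆ S' ∧ S'.card = R.card + 1)
            = (T \ R).image (fun y => insert y R) := by
          ext S'
          simp only [Finset.mem_filter, Finset.mem_powerset, Finset.mem_image,
            Finset.mem_sdiff]
          constructor
          · rintro ⟨hsub, hRS', hcS'⟩
            have hz1 : (S' \ R).card = 1 := by
              rw [Finset.card_sdiff_of_subset hRS']; omega
            obtain ⟨z, hz⟩ := Finset.card_eq_one.mp hz1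
            have hzS' : z ∈ S' := by
              have : z ∈ S' \ R := by rw [hz]; exact Finset.mem_singleton_self _
              exact (Finset.mem_sdiff.mp this).1
            have hzR : z ∉ R := by
              have : z ∈ S' \ R := by rw [hz]; exact Finset.mem_singleton_self _
              exact (Finset.mem_sdiff.mp this).2
            refine ⟨z, ⟨hsub hzS', hzR⟩, ?_⟩
            have hez : S'.erase z = R := by
              rw [Finset.erase_eq, ← hz, Finset.sdiff_sdiff_self_left,
                Finset.inter_eq_right.mpr hRS']
            rw [← hez, Finset.insert_erase hzS']
          · rintro ⟨y, ⟨hyT, hyR⟩, rfl⟩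
            refine ⟨Finset.insert_subset hyT hRT, Finset.subset_insert _ _, ?_⟩
            rw [Finset.card_insert_of_notMem hyR]
        have hinj2 : ∀ y ∈ T \ R, ∀ y' ∈ T \ R, insert y R = insert y' R → y = y' := by
          intro y hy y' hy' he
          have : y ∈ insert y' R := he ▸ Finset.mem_insert_self y R
          rcases Finset.mem_insert.mp this with h | h
          · exact h
          · exact absurd h (Finset.mem_sdiff.mp hy).2
        have hgS3 : gS K v0 Q T
            = ∑ y ∈ T \ R, (if insert y R ∉ K then (1 : ZMod 2) else 0) := by
          rw [gS, Finset.sum_congr rfl hgterm, ← Finset.sum_filter, himg,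
            Finset.sum_image hinj2]
        have hTR2 : (T \ R).card = 2 := by
          rw [Finset.card_sdiff_of_subset hRT]; omega
        obtain ⟨a, b, hab, habeq⟩ := Finset.card_eq_two.mp hTR2
        have haTR : a ∈ T ∧ a ∉ R := by
          have : a ∈ T \ R := by rw [habeq]; exact Finset.mem_insert_self _ _
          exact Finset.mem_sdiff.mp this
        have hbTR : b ∈ T ∧ b ∉ R := by
          have : b ∈ T \ R := by
            rw [habeq]
            exact Finset.mem_insert_of_mem (Finset.mem_singleton_self _)
          exact Finset.mem_sdiff.mp this
        have hmemT : ∀ y, y ∈ T ↔ (y ∈ R ∨ y = a ∨ y = b) := by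
          intro y
          constructor
          · intro hy
            by_cases hyR : y ∈ R
            · exact Or.inl hyR
            · have : y ∈ T \ R := Finset.mem_sdiff.mpr ⟨hy, hyR⟩
              rw [habeq] at this
              rcases Finset.mem_insert.mp this with rfl | h
              · exact Or.inr (Or.inl rfl)
              · exact Or.inr (Or.inr (Finset.mem_singleton.mp h))
          · rintro (h | rfl | rfl)
            exacts [hRT h, haTR.1, hbTR.1]
        have hea : T.erase a = insert b R := by
          ext y
          rw [Finset.mem_erase, Finset.mem_insert, hmemT y]
          constructor
          · rintro ⟨hya, (h | rfl | rfl)⟩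
            exacts [Or.inr h, absurd rfl hya, Or.inl rfl]
          · rintro (rfl | h)
            · exact ⟨fun hh => hab hh.symm, Or.inr (Or.inr rfl)⟩
            · exact ⟨fun hh => haTR.2 (hh ▸ h), Or.inl h⟩
        have heb : T.erase b = insert a R := by
          ext y
          rw [Finset.mem_erase, Finset.mem_insert, hmemT y]
          constructor
          · rintro ⟨hya, (h | rfl | rfl)⟩
            exacts [Or.inr h, Or.inl rfl, absurd rfl hya]
          · rintro (rfl | h)
            · exact ⟨fun hh => hab hh, Or.inr (Or.inl rfl)⟩
            · exact ⟨fun hh => hbTR.2 (hh ▸ h), Or.inl h⟩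
        rw [hfS3, hgS3, habeq, Finset.sum_pair hab, Finset.sum_pair hab, hea, heb]
        by_cases h1 : insert a R ∈ K <;> by_cases h2 : insert b R ∈ K <;>
          simp [h1, h2] <;> decide
      · -- `R ⊄ T` : both sides vanish
        have hf0 : fS K v0 Q T = 0 := by
          rw [hfS1, Finset.sum_congr rfl hterm]
          apply Finset.sum_eq_zero
          intro x hx
          rw [if_neg]
          intro h
          exact hRT (h.trans (Finset.erase_subset _ _))
        have hg0 : gS K v0 Q T = 0 := by
          apply Finset.sum_eq_zero
          intro S' hS'
          have hsub : S' ⊆ T := Finset.mem_powerset.mp hS'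
          have hv0S' : v0 ∉ S' := fun h => hv0T (hsub h)
          rw [if_neg]
          intro h
          rcases suppPhi_cases h with ⟨_, he⟩ | ⟨hS'K, _, x, hx, he⟩
          · exact hv0S' (he ▸ hv0Q)
          · have hvS'x : v0 ∉ S'.erase x := fun hh => hv0S' (Finset.mem_erase.mp hh).2
            have hRe : R = S'.erase x := by
              rw [hR, he, Finset.erase_insert hvS'x]
            exact hRT ((hRe ▸ Finset.erase_subset x S' : R ⊆ S').trans hsub)
        rw [hf0, hg0]
    · -- case `v0 ∉ Q`
      have hterm : ∀ x ∈ T, (if B x ∈ K then (if Q ⊆ B x then (1 : ZMod 2) else 0) else 0)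
          = if T.erase x = Q then 1 else 0 := by
        intro x hx
        by_cases he : T.erase x = Q
        · have hBK : B x ∈ K := by
            rw [show B x = insert v0 (T.erase x) from rfl,
              insert_v0_erase_iff hK hne h0 hadm hT hTK x, he]
            exact hQ
          have hQB : Q ⊆ B x := by
            intro q hq
            exact Finset.mem_insert_of_mem (by rw [he]; exact hq)
          rw [if_pos hBK, if_pos hQB, if_pos he]
        · have hnQB : ¬ Q ⊆ B x := by
            intro hsub
            apply he
            have hQsub : Q ⊆ T.erase x := by
              intro q hq
              rcases Finset.mem_insert.mp (hsub hq) with rfl | h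
              · exact absurd hq hv0Q
              · exact h
            refine (Finset.eq_of_subset_of_card_le hQsub ?_).symm
            rw [Finset.card_erase_of_mem hx]
            omega
          rw [if_neg he, if_neg hnQB, ite_self]
      have hfS2 : fS K v0 Q T = if Q ⊆ T then 1 else 0 := by
        rw [hfS1, Finset.sum_congr rfl hterm]
        by_cases hQT : Q ⊆ T
        · rw [if_pos hQT]
          have hiff2 : ∀ x ∈ T, (T.erase x = Q) ↔ x ∉ Q := by
            intro x hx
            constructor
            · intro he hxQ
              rw [← he] at hxQ
              exact (Finset.mem_erase.mp hxQ).1 rfl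
            · intro hxQ
              have hsub : Q ⊆ T.erase x := Finset.subset_erase.mpr ⟨hQT, hxQ⟩
              refine (Finset.eq_of_subset_of_card_le hsub ?_).symm
              rw [Finset.card_erase_of_mem hx]
              omega
          rw [Finset.sum_congr rfl (fun x hx => if_congr (hiff2 x hx) rfl rfl),
            Finset.sum_boole]
          have hone : (T.filter (fun x => x ∉ Q)).card = 1 := by
            rw [← Finset.sdiff_eq_filter, Finset.card_sdiff_of_subset hQT]
            omega
          rw [hone, Nat.cast_one]
        · rw [if_neg hQT]
          apply Finset.sum_eq_zero
          intro x hx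
          rw [if_neg]
          intro he
          apply hQT
          rw [← he]
          exact Finset.erase_subset _ _
      have hgS2 : gS K v0 Q T = if Q ⊆ T then 1 else 0 := by
        have hiff : ∀ S' ∈ T.powerset, (Q ∈ suppPhi K v0 S') ↔ S' = Q := by
          intro S' hS'
          constructor
          · intro h
            rcases suppPhi_cases h with ⟨_, rfl⟩ | ⟨_, _, x, hx, he⟩
            · rfl
            · exact absurd (he ▸ Finset.mem_insert_self v0 _) hv0Q
          · rintro rfl
            rw [suppPhi, if_pos hQ]
            exact Finset.mem_singleton_self _
        rw [gS, Finset.sum_congr rfl (fun S' hS' => if_congr (hiff S' hS') rfl rfl),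
          Finset.sum_ite_eq' _ _ _]
        simp [Finset.mem_powerset]
      rw [hfS2, hgS2]


section CoreLemmas

variable {K : Finset (Finset V)} {v0 v1 : V}

lemma card_parts (F : Finset (V ⊕ V)) : F.card = (leftPart F).card + (rightPart F).card := by
  conv_lhs => rw [← joinFace_parts F]
  exact card_joinFace

lemma leftPart_mono {F F' : Finset (V ⊕ V)} (h : F' ⊆ F) : leftPart F' ⊆ leftPart F := by
  intro a ha
  exact mem_leftPart.mpr (h (mem_leftPart.mp ha))

lemma rightPart_mono {F F' : Finset (V ⊕ V)} (h : F' ⊆ F) : rightPart F' ⊆ rightPart F := by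
  intro a ha
  exact mem_rightPart.mpr (h (mem_rightPart.mp ha))

lemma deletedJoin_mem_of_subset {L : Finset (Finset V)} (hL : IsComplex L)
    {F F' : Finset (V ⊕ V)} (h : F' ⊆ F) (hF : F ∈ deletedJoin L) :
    F' ∈ deletedJoin L := by
  rcases mem_deletedJoin.mp hF with ⟨h1, h2, h3⟩
  refine mem_deletedJoin.mpr ⟨hL.2 _ h1 _ (leftPart_mono h), hL.2 _ h2 _ (rightPart_mono h), ?_⟩
  rw [← Finset.subset_empty, ← h3]
  exact Finset.inter_subset_inter (leftPart_mono h) (rightPart_mono h)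

lemma core_identity (hK : IsComplex K) (hne : v0 ≠ v1) (h0 : ({v0} : Finset V) ∈ K)
    (hadm : Admissible K v0 v1) {n : ℕ} {A G : Finset (V ⊕ V)}
    (hA : A ∈ facesOfDim (deletedJoin K) n)
    (hG : G ∈ facesOfDim (deletedJoin (contractC K v0 v1)) (n + 1)) :
    (∑ F ∈ facesOfDim (deletedJoin K) (n + 1),
        if A ⊆ F ∧ F ∈ suppPhiStar K v0 G then (1 : ZMod 2) else 0)
      = ∑ G' ∈ facesOfDim (deletedJoin (contractC K v0 v1)) n,
          if G' ⊆ G ∧ A ∈ suppPhiStar K v0 G' then (1 : ZMod 2) else 0 := by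
  set K' := contractC K v0 v1 with hK'
  have hK'c : IsComplex K' := contract_isComplex hK hne
  rcases Finset.mem_filter.mp hA with ⟨hA1, hA2⟩
  rcases mem_deletedJoin.mp hA1 with ⟨hPK, hQK, hPQd⟩
  rcases Finset.mem_filter.mp hG with ⟨hG1, hG2⟩
  rcases mem_deletedJoin.mp hG1 with ⟨hSK, hTK, hSTd⟩
  have hAcard : (leftPart A).card + (rightPart A).card = n + 1 := by
    rw [← card_parts A]; exact hA2
  have hGcard : (leftPart G).card + (rightPart G).card = n + 2 := by
    rw [← card_parts G]; exact hG2
  have hjinj : ∀ p ∈ (suppPhi K v0 (leftPart G)) ×ˢ (suppPhi K v0 (rightPart G)),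
      ∀ q ∈ (suppPhi K v0 (leftPart G)) ×ˢ (suppPhi K v0 (rightPart G)),
      joinFace p.1 p.2 = joinFace q.1 q.2 → p = q := by
    intro p _ q _ h
    obtain ⟨h1, h2⟩ := joinFace_inj h
    exact Prod.ext h1 h2
  -- LHS = fS P S * fS Q T
  have hLHS : (∑ F ∈ facesOfDim (deletedJoin K) (n + 1),
        if A ⊆ F ∧ F ∈ suppPhiStar K v0 G then (1 : ZMod 2) else 0)
      = fS K v0 (leftPart A) (leftPart G) * fS K v0 (rightPart A) (rightPart G) := by
    have step1 : ∀ F ∈ facesOfDim (deletedJoin K) (n + 1),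
        (if A ⊆ F ∧ F ∈ suppPhiStar K v0 G then (1 : ZMod 2) else 0)
        = if F ∈ suppPhiStar K v0 G then (if A ⊆ F then (1 : ZMod 2) else 0) else 0 := by
      intro F _
      by_cases h1 : A ⊆ F <;> by_cases h2 : F ∈ suppPhiStar K v0 G <;> simp [h1, h2]
    rw [Finset.sum_congr rfl step1, ← Finset.sum_filter, Finset.filter_mem_eq_inter,
      Finset.inter_eq_right.mpr (suppPhiStar_subset_faces hK hne hG),
      suppPhiStar, Finset.sum_image hjinj, Finset.sum_product]
    rw [fS, fS, Finset.sum_mul_sum]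
    apply Finset.sum_congr rfl
    intro a _
    apply Finset.sum_congr rfl
    intro b _
    have hsub : A ⊆ joinFace a b ↔ leftPart A ⊆ a ∧ rightPart A ⊆ b := by
      conv_lhs => rw [← joinFace_parts A]
      exact joinFace_subset_joinFace
    by_cases h1 : leftPart A ⊆ a <;> by_cases h2 : rightPart A ⊆ b <;>
      simp [hsub, h1, h2]
  -- RHS = gS P S * gS Q T
  have hRHS : (∑ G' ∈ facesOfDim (deletedJoin K') n,
        if G' ⊆ G ∧ A ∈ suppPhiStar K v0 G' then (1 : ZMod 2) else 0)
      = gS K v0 (leftPart A) (leftPart G) * gS K v0 (rightPart A) (rightPart G) := by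
    have step1 : ∀ G' ∈ facesOfDim (deletedJoin K') n,
        (if G' ⊆ G ∧ A ∈ suppPhiStar K v0 G' then (1 : ZMod 2) else 0)
        = if G' ∈ G.powerset.filter (fun G' => A ∈ suppPhiStar K v0 G')
            then (1 : ZMod 2) else 0 := by
      intro G' _
      refine if_congr ?_ rfl rfl
      rw [Finset.mem_filter, Finset.mem_powerset]
    have hsets : (facesOfDim (deletedJoin K') n).filter
          (fun G' => G' ∈ G.powerset.filter (fun G' => A ∈ suppPhiStar K v0 G'))
        = G.powerset.filter (fun G' => A ∈ suppPhiStar K v0 G') := by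
      apply Finset.filter_mem_eq_inter.trans
      apply Finset.inter_eq_right.mpr
      intro G' hG'
      rcases Finset.mem_filter.mp hG' with ⟨hG'p, hG's⟩
      have hG'sub : G' ⊆ G := Finset.mem_powerset.mp hG'p
      have hG'dj : G' ∈ deletedJoin K' := deletedJoin_mem_of_subset hK'c hG'sub hG1
      rcases mem_deletedJoin.mp hG'dj with ⟨hl, hr, _⟩
      rcases mem_suppPhiStar.mp hG's with ⟨hsl, hsr⟩
      refine Finset.mem_filter.mpr ⟨hG'dj, ?_⟩
      rw [card_parts G', ← card_of_mem_suppPhi (v0_notMem_contract hne hl) hsl,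
        ← card_of_mem_suppPhi (v0_notMem_contract hne hr) hsr, ← card_parts A, hA2]
    have hpow : G.powerset
        = ((leftPart G).powerset ×ˢ (rightPart G).powerset).image
            (fun p => joinFace p.1 p.2) := by
      ext G'
      rw [Finset.mem_powerset, Finset.mem_image]
      constructor
      · intro h
        refine ⟨(leftPart G', rightPart G'), ?_, joinFace_parts G'⟩
        rw [Finset.mem_product, Finset.mem_powerset, Finset.mem_powerset]
        exact ⟨leftPart_mono h, rightPart_mono h⟩
      · rintro ⟨p, hp, rfl⟩
        rw [Finset.mem_product, Finset.mem_powerset, Finset.mem_powerset] at hp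
        conv_rhs => rw [← joinFace_parts G]
        exact joinFace_subset_joinFace.mpr hp
    have hjinj2 : ∀ p ∈ (leftPart G).powerset ×ˢ (rightPart G).powerset,
        ∀ q ∈ (leftPart G).powerset ×ˢ (rightPart G).powerset,
        joinFace p.1 p.2 = joinFace q.1 q.2 → p = q := by
      intro p _ q _ h
      obtain ⟨h1, h2⟩ := joinFace_inj h
      exact Prod.ext h1 h2
    rw [Finset.sum_congr rfl step1, ← Finset.sum_filter, hsets, Finset.sum_filter,
      hpow, Finset.sum_image hjinj2, Finset.sum_product]
    rw [gS, gS, Finset.sum_mul_sum]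
    apply Finset.sum_congr rfl
    intro a _
    apply Finset.sum_congr rfl
    intro b _
    have hmem : A ∈ suppPhiStar K v0 (joinFace a b) ↔
        leftPart A ∈ suppPhi K v0 a ∧ rightPart A ∈ suppPhi K v0 b := by
      rw [mem_suppPhiStar, leftPart_joinFace, rightPart_joinFace]
    by_cases h1 : leftPart A ∈ suppPhi K v0 a <;>
      by_cases h2 : rightPart A ∈ suppPhi K v0 b <;> simp [hmem, h1, h2]
  rw [hLHS, hRHS]
  -- now the case analysis on cardinalities
  by_cases hc1 : (leftPart G).card < (leftPart A).card
  · rw [fS_zero hne hSK hc1, gS_zero hK hne hSK hc1, zero_mul, zero_mul]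
  by_cases hc2 : (rightPart G).card < (rightPart A).card
  · rw [fS_zero hne hTK hc2, gS_zero hK hne hTK hc2, mul_zero, mul_zero]
  have hcases : ((leftPart A).card = (leftPart G).card
        ∧ (rightPart A).card + 1 = (rightPart G).card)
      ∨ ((leftPart A).card + 1 = (leftPart G).card
        ∧ (rightPart A).card = (rightPart G).card) := by omega
  rcases hcases with ⟨he1, he2⟩ | ⟨he1, he2⟩
  · rw [fS_eq hne hSK he1, gS_eq hK hne hSK he1,
      fS_eq_gS hK hne h0 hadm hTK hQK he2]
  · rw [fS_eq_gS hK hne h0 hadm hSK hPK he1,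
      fS_eq (v0 := v0) hne hTK he2, gS_eq hK hne hTK he2]

end CoreLemmas


section Assembly

variable {K : Finset (Finset V)} {v0 v1 : V}

lemma mem_suppPhiStar_tauFace {A G : Finset (V ⊕ V)} :
    tauFace A ∈ suppPhiStar K v0 G ↔ A ∈ suppPhiStar K v0 (tauFace G) := by
  rw [mem_suppPhiStar, mem_suppPhiStar, leftPart_tauFace, rightPart_tauFace,
    leftPart_tauFace, rightPart_tauFace, and_comm]

lemma phiStar_eval (hK : IsComplex K) (hne : v0 ≠ v1) {n : ℕ}
    (c : Chains (deletedJoin (contractC K v0 v1)) n)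
    (G : {F // F ∈ facesOfDim (deletedJoin (contractC K v0 v1)) n}) :
    ∃ hmem : joinFace (canonF K v0 v1 (leftPart G.1)) (canonF K v0 v1 (rightPart G.1))
        ∈ facesOfDim (deletedJoin K) n,
      phiStar K (contractC K v0 v1) v0 n c
        ⟨joinFace (canonF K v0 v1 (leftPart G.1)) (canonF K v0 v1 (rightPart G.1)),
          hmem⟩ = c G := by
  obtain ⟨hG1, hG2⟩ := Finset.mem_filter.mp G.2
  obtain ⟨hS, hT, hd⟩ := mem_deletedJoin.mp hG1
  have ha := canonF_mem_suppPhi hK hne hS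
  have hb := canonF_mem_suppPhi hK hne hT
  have hpart := part1_lemma hK hne hS hT hd ha hb
  have hmem : joinFace (canonF K v0 v1 (leftPart G.1)) (canonF K v0 v1 (rightPart G.1))
      ∈ facesOfDim (deletedJoin K) n := by
    refine Finset.mem_filter.mpr ⟨hpart.2, ?_⟩
    rw [card_joinFace, card_of_mem_suppPhi (v0_notMem_contract hne hS) ha,
      card_of_mem_suppPhi (v0_notMem_contract hne hT) hb, ← card_parts, hG2]
  refine ⟨hmem, ?_⟩
  rw [phiStar]
  have hcond : ∀ G' ∈ (facesOfDim (deletedJoin (contractC K v0 v1)) n).attach,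
      (joinFace (canonF K v0 v1 (leftPart G.1)) (canonF K v0 v1 (rightPart G.1))
        ∈ suppPhiStar K v0 G'.1) ↔ G' = G := by
    intro G' _
    constructor
    · intro h
      rcases mem_suppPhiStar.mp h with ⟨h1, h2⟩
      rw [leftPart_joinFace] at h1
      rw [rightPart_joinFace] at h2
      obtain ⟨hl, hr, _⟩ := mem_deletedJoin.mp (Finset.mem_filter.mp G'.2).1
      have e1 : leftPart G'.1 = leftPart G.1 := canonF_unique hK hne hS hl h1
      have e2 : rightPart G'.1 = rightPart G.1 := canonF_unique hK hne hT hr h2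
      apply Subtype.ext
      rw [← joinFace_parts G'.1, e1, e2, joinFace_parts]
    · rintro rfl
      exact mem_suppPhiStar.mpr ⟨by rw [leftPart_joinFace]; exact ha,
        by rw [rightPart_joinFace]; exact hb⟩
  rw [Finset.sum_congr rfl (fun G' hG' => if_congr (hcond G' hG') rfl rfl),
    Finset.sum_ite_eq' _ _ _, if_pos (Finset.mem_attach _ _)]

end Assembly

/-- For an admissible contraction of `v0` onto `v1` turning `K` into
`K'`, every set `A¹ ⊎ B²` occurring in `φ_*(S¹ ⊎ T²)` is a face of `K_*`
(in particular `A ∩ B = ∅`), and the linear extension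
`φ_* : C_•(K'_*;ℤ/2) → C_•(K_*;ℤ/2)` is an injective chain map commuting with the
linear maps induced by the involutions `τ` of `K'_*` and of `K_*`. -/
theorem phiStar_injective_equivariant_chain_map
    (K : Finset (Finset V)) (hK : IsComplex K) (v0 v1 : V) (hne : v0 ≠ v1)
    (h0 : ({v0} : Finset V) ∈ K) (h1 : ({v1} : Finset V) ∈ K)
    (hadm : Admissible K v0 v1) :
    (∀ S T : Finset V, S ∈ contractC K v0 v1 → T ∈ contractC K v0 v1 → S ∩ T = ∅ →
      ∀ A ∈ suppPhi K v0 S, ∀ B ∈ suppPhi K v0 T,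
        A ∩ B = ∅ ∧ joinFace A B ∈ deletedJoin K) ∧
    (∀ n : ℕ, Function.Injective (phiStar K (contractC K v0 v1) v0 n)) ∧
    (∀ n : ℕ, IsLinearMap (ZMod 2) (phiStar K (contractC K v0 v1) v0 n)) ∧
    (∀ (n : ℕ) (c : Chains (deletedJoin (contractC K v0 v1)) (n + 1)),
      bdry (deletedJoin K) n (phiStar K (contractC K v0 v1) v0 (n + 1) c) =
        phiStar K (contractC K v0 v1) v0 n
          (bdry (deletedJoin (contractC K v0 v1)) n c)) ∧
    (∀ (n : ℕ) (c : Chains (deletedJoin (contractC K v0 v1)) n),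
      phiStar K (contractC K v0 v1) v0 n
          (tauChain (deletedJoin (contractC K v0 v1)) n c) =
        tauChain (deletedJoin K) n (phiStar K (contractC K v0 v1) v0 n c)) := by
  set K' := contractC K v0 v1 with hK'def
  refine ⟨?_, ?_, ?_, ?_, ?_⟩
  · -- part 1 : faces of the deleted join
    intro S T hS hT hST A hA B hB
    exact part1_lemma hK hne hS hT hST hA hB
  · -- part 2 : injectivity
    intro n c c' h
    funext G
    obtain ⟨hmem, he⟩ := phiStar_eval hK hne c G
    obtain ⟨hmem', he'⟩ := phiStar_eval hK hne c' G
    rw [← he, ← he', h]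
  · -- part 3 : linearity
    intro n
    constructor
    · intro c c'
      funext A
      show (∑ G ∈ (facesOfDim (deletedJoin K') n).attach,
          if A.1 ∈ suppPhiStar K v0 G.1 then (c + c') G else 0) = _
      rw [show (phiStar K K' v0 n c + phiStar K K' v0 n c') A
          = phiStar K K' v0 n c A + phiStar K K' v0 n c' A from rfl, phiStar, phiStar,
        ← Finset.sum_add_distrib]
      apply Finset.sum_congr rfl
      intro G _
      by_cases h : A.1 ∈ suppPhiStar K v0 G.1 <;> simp [h]
    · intro r c
      funext A
      show (∑ G ∈ (facesOfDim (deletedJoin K') n).attach,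
          if A.1 ∈ suppPhiStar K v0 G.1 then (r • c) G else 0) = _
      rw [show (r • phiStar K K' v0 n c) A = r * phiStar K K' v0 n c A from rfl,
        phiStar, Finset.mul_sum]
      apply Finset.sum_congr rfl
      intro G _
      by_cases h : A.1 ∈ suppPhiStar K v0 G.1 <;> simp [h, smul_eq_mul]
  · -- part 4 : chain map
    intro n c
    funext A
    have expand1 : bdry (deletedJoin K) n (phiStar K K' v0 (n + 1) c) A
        = ∑ F ∈ (facesOfDim (deletedJoin K) (n + 1)).attach,
            ∑ G ∈ (facesOfDim (deletedJoin K') (n + 1)).attach,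
              (if A.1 ⊆ F.1 ∧ F.1 ∈ suppPhiStar K v0 G.1 then c G else 0) := by
      rw [bdry]
      apply Finset.sum_congr rfl
      intro F _
      by_cases h : A.1 ⊆ F.1
      · rw [if_pos h, phiStar]
        apply Finset.sum_congr rfl
        intro G _
        by_cases h2 : F.1 ∈ suppPhiStar K v0 G.1 <;> simp [h, h2]
      · rw [if_neg h]
        symm
        apply Finset.sum_eq_zero
        intro G _
        exact if_neg (fun hh => h hh.1)
    have expand2 : phiStar K K' v0 n (bdry (deletedJoin K') n c) A
        = ∑ G' ∈ (facesOfDim (deletedJoin K') n).attach,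
            ∑ G ∈ (facesOfDim (deletedJoin K') (n + 1)).attach,
              (if G'.1 ⊆ G.1 ∧ A.1 ∈ suppPhiStar K v0 G'.1 then c G else 0) := by
      rw [phiStar]
      apply Finset.sum_congr rfl
      intro G' _
      by_cases h : A.1 ∈ suppPhiStar K v0 G'.1
      · rw [if_pos h, bdry]
        apply Finset.sum_congr rfl
        intro G _
        by_cases h2 : G'.1 ⊆ G.1 <;> simp [h, h2]
      · rw [if_neg h]
        symm
        apply Finset.sum_eq_zero
        intro G _
        exact if_neg (fun hh => h hh.2)
    rw [expand1, expand2, Finset.sum_comm]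
    conv_rhs => rw [Finset.sum_comm]
    apply Finset.sum_congr rfl
    intro G _
    have pull1 : (∑ F ∈ (facesOfDim (deletedJoin K) (n + 1)).attach,
          (if A.1 ⊆ F.1 ∧ F.1 ∈ suppPhiStar K v0 G.1 then c G else 0))
        = (∑ F ∈ facesOfDim (deletedJoin K) (n + 1),
            if A.1 ⊆ F ∧ F ∈ suppPhiStar K v0 G.1 then (1 : ZMod 2) else 0) * c G := by
      rw [Finset.sum_mul]
      rw [← Finset.sum_attach (facesOfDim (deletedJoin K) (n + 1))
        (fun F => (if A.1 ⊆ F ∧ F ∈ suppPhiStar K v0 G.1 then (1 : ZMod 2) else 0) * c G)]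
      apply Finset.sum_congr rfl
      intro F _
      by_cases h : A.1 ⊆ F.1 ∧ F.1 ∈ suppPhiStar K v0 G.1 <;> simp [h]
    have pull2 : (∑ G' ∈ (facesOfDim (deletedJoin K') n).attach,
          (if G'.1 ⊆ G.1 ∧ A.1 ∈ suppPhiStar K v0 G'.1 then c G else 0))
        = (∑ G' ∈ facesOfDim (deletedJoin K') n,
            if G' ⊆ G.1 ∧ A.1 ∈ suppPhiStar K v0 G' then (1 : ZMod 2) else 0) * c G := by
      rw [Finset.sum_mul]
      rw [← Finset.sum_attach (facesOfDim (deletedJoin K') n)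
        (fun G' => (if G' ⊆ G.1 ∧ A.1 ∈ suppPhiStar K v0 G' then (1 : ZMod 2) else 0) * c G)]
      apply Finset.sum_congr rfl
      intro G' _
      by_cases h : G'.1 ⊆ G.1 ∧ A.1 ∈ suppPhiStar K v0 G'.1 <;> simp [h]
    rw [pull1, pull2, core_identity hK hne h0 hadm A.2 G.2]
  · -- part 5 : equivariance
    intro n c
    funext A
    have htauA : tauFace A.1 ∈ facesOfDim (deletedJoin K) n := tauFace_mem_facesOfDim A.2
    have hRHS : tauChain (deletedJoin K) n (phiStar K K' v0 n c) A
        = ∑ G ∈ (facesOfDim (deletedJoin K') n).attach,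
            (if tauFace A.1 ∈ suppPhiStar K v0 G.1 then c G else 0) := by
      rw [tauChain, dif_pos htauA]
      rfl
    have hLHS : phiStar K K' v0 n (tauChain (deletedJoin K') n c) A
        = ∑ G ∈ (facesOfDim (deletedJoin K') n).attach,
            (if A.1 ∈ suppPhiStar K v0 G.1
              then c ⟨tauFace G.1, tauFace_mem_facesOfDim G.2⟩ else 0) := by
      rw [phiStar]
      apply Finset.sum_congr rfl
      intro G _
      by_cases h : A.1 ∈ suppPhiStar K v0 G.1
      · rw [if_pos h, if_pos h, tauChain, dif_pos (tauFace_mem_facesOfDim G.2)]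
      · rw [if_neg h, if_neg h]
    rw [hLHS, hRHS]
    refine Finset.sum_nbij'
      (fun G => (⟨tauFace G.1, tauFace_mem_facesOfDim G.2⟩ :
        {F // F ∈ facesOfDim (deletedJoin K') n}))
      (fun G => (⟨tauFace G.1, tauFace_mem_facesOfDim G.2⟩ :
        {F // F ∈ facesOfDim (deletedJoin K') n}))
      (fun G _ => Finset.mem_attach _ _) (fun G _ => Finset.mem_attach _ _)
      (fun G _ => Subtype.ext (tauFace_tauFace G.1))
      (fun G _ => Subtype.ext (tauFace_tauFace G.1)) ?_
    intro G _
    have hiff : (A.1 ∈ suppPhiStar K v0 G.1) ↔ tauFace A.1 ∈ suppPhiStar K v0 (tauFace G.1) := by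
      rw [mem_suppPhiStar_tauFace, tauFace_tauFace]
    by_cases h : A.1 ∈ suppPhiStar K v0 G.1
    · rw [if_pos h, if_pos (hiff.mp h)]
    · rw [if_neg h, if_neg (fun hh => h (hiff.mpr hh))]
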